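/- (Replacing cycle edges preserves rooted spanning trees.) Let G be a connected multidigraph, σ a cycle in G, U_j a node of σ, e the edge of σ with source U_j, and τ a spanning tree of G rooted at U_j. Define τ̂ by replacing, for every node U_l ≠ U_j of σ, the unique edge of τ with source U_l by the edge of σ with source U_l. Then τ̂ is a spanning tree of G rooted at U_j that contains σ ∖ {e}, and hence τ̂ ∪ {e} ∈ Γ(σ). -/
import Mathlib


/-- A multidigraph: a set of nodes `V`, a set of edges `E`, and source/target maps. -/
structure Multidigraph (V E : Type*) where
  src : E → V
  tgt : E → V

namespace Multidigraph

variable {V E : Type*}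

/-- One-step edge relation using only the edges in `τ`. -/
def Rel (G : Multidigraph V E) (τ : Set E) (a b : V) : Prop :=
  ∃ e ∈ τ, G.src e = a ∧ G.tgt e = b

/-- Undirected (symmetrized) one-step relation. -/
def URel (G : Multidigraph V E) (a b : V) : Prop :=
  G.Rel Set.univ a b ∨ G.Rel Set.univ b a

/-- Node set of the (weakly) connected component containing `v`. -/
def component (G : Multidigraph V E) (v : V) : Set V :=
  {w | Relation.ReflTransGen G.URel v w}

/-- `τ` is a spanning tree of the subgraph of `G` induced on the node set `W`,
rooted at `r`: all edges stay inside `W`, every non-root node of `W` has exactly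
one outgoing edge in `τ`, the root has none, and every node of `W` reaches `r`
through `τ`. -/
def IsSpanningTreeOn (G : Multidigraph V E) (W : Set V) (τ : Finset E) (r : V) : Prop :=
  (∀ e ∈ τ, G.src e ∈ W ∧ G.tgt e ∈ W) ∧
  (∀ v ∈ W, v ≠ r → ∃! e, e ∈ τ ∧ G.src e = v) ∧
  (∀ e ∈ τ, G.src e ≠ r) ∧
  (∀ v ∈ W, Relation.ReflTransGen (G.Rel (τ : Set E)) v r)

/-- Spanning tree of `G` rooted at `r`. -/
def IsSpanningTree (G : Multidigraph V E) (τ : Finset E) (r : V) : Prop :=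
  G.IsSpanningTreeOn Set.univ τ r

/-- A cycle: a nonempty closed directed path with pairwise distinct nodes. -/
def IsCycle (G : Multidigraph V E) (l : List E) : Prop :=
  l ≠ [] ∧ (l.map G.src).Nodup ∧
  l.Chain' (fun a b => G.tgt a = G.src b) ∧
  ∀ h : l ≠ [], G.tgt (l.getLast h) = G.src (l.head h)

def StronglyConnected (G : Multidigraph V E) : Prop :=
  ∀ a b : V, Relation.ReflTransGen (G.Rel Set.univ) a b

def Connected (G : Multidigraph V E) : Prop :=
  ∀ a b : V, Relation.ReflTransGen G.URel a b

/-- Incidence matrix of a multidigraph. -/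
def incidence [DecidableEq V] (G : Multidigraph V E) : Matrix V E ℝ := fun v e =>
  if G.tgt e = v ∧ G.src e ≠ v then 1
  else if G.src e = v ∧ G.tgt e ≠ v then (-1 : ℝ) else 0

end Multidigraph

open scoped Classical

/-- Replacing cycle edges preserves rooted spanning trees:
replacing, for every node `U_l ≠ U_j` of the cycle `σ`, the unique edge of the
spanning tree `τ` (rooted at `U_j = s(e)`) with source `U_l` by the edge of
`σ` with source `U_l`, yields a spanning tree `τ̂` rooted at `U_j` containing
`σ ∖ {e}`; hence `τ̂ ∪ {e} ∈ Γ(σ)`. -/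
theorem stmt19 {V E : Type} [Fintype V] [Fintype E] [DecidableEq E]
    (G : Multidigraph V E) (hconn : G.Connected)
    (σ : List E) (hσ : G.IsCycle σ) (e : E) (he : e ∈ σ)
    (τ : Finset E) (hτ : G.IsSpanningTree τ (G.src e))
    (τhat : Finset E)
    (hdef : τhat = (τ.filter (fun f => ¬ ∃ g ∈ σ, G.src g = G.src f)) ∪ σ.toFinset.erase e) :
    G.IsSpanningTree τhat (G.src e) ∧
    (∀ f ∈ σ, f ≠ e → f ∈ τhat) ∧
    insert e τhat ∈
      {γ : Finset E | ∃ e' ∈ σ, ∃ τ' : Finset E,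
        G.IsSpanningTree τ' (G.src e') ∧ (∀ f ∈ σ, f ≠ e' → f ∈ τ') ∧
        γ = insert e' τ'} := by
  classical
  obtain ⟨hne, hnodup, hchain, hclose⟩ := hσ
  have hinj : ∀ ⦃f⦄, f ∈ σ → ∀ ⦃g⦄, g ∈ σ → G.src f = G.src g → f = g :=
    List.inj_on_of_nodup_map hnodup
  have hσnd : σ.Nodup := List.Nodup.of_map _ hnodup
  have hmem : ∀ f, f ∈ τhat ↔
      (f ∈ τ ∧ ¬ ∃ g ∈ σ, G.src g = G.src f) ∨ (f ∈ σ ∧ f ≠ e) := by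
    intro f
    subst hdef
    simp only [Finset.mem_union, Finset.mem_filter, Finset.mem_erase, List.mem_toFinset]
    tauto
  obtain ⟨hτW, hτuniq, hτroot, hτreach⟩ := hτ
  have hnpos : 0 < σ.length := List.length_pos_iff.2 hne
  have hlt : ∀ a : ℕ, a % σ.length < σ.length := fun a => Nat.mod_lt _ hnpos
  obtain ⟨k, hk, hke⟩ := List.mem_iff_getElem.1 he
  -- step lemma
  have hstep : ∀ i (h : i < σ.length),
      G.tgt σ[i] = G.src (σ[(i + 1) % σ.length]'(hlt _)) := by
    intro i h
    by_cases h1 : i + 1 < σ.length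
    · have := List.isChain_iff_getElem.1 hchain i (by omega)
      simpa [Nat.mod_eq_of_lt h1] using this
    · have h0 : (i + 1) % σ.length = 0 := by
        have : i + 1 = σ.length := by omega
        simp [this]
      have hl := hclose hne
      rw [List.getLast_eq_getElem, List.head_eq_getElem] at hl
      have hi : i = σ.length - 1 := by omega
      subst hi
      simp only [h0]
      exact hl
  -- cycle edges other than e are in τhat
  have hcycmem : ∀ i (h : i < σ.length), i ≠ k → σ[i] ∈ τhat := by
    intro i h hik
    refine (hmem _).2 (Or.inr ⟨List.getElem_mem _, ?_⟩)
    intro hfe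
    exact hik ((hσnd.getElem_inj_iff).1 (by rw [hfe, hke]))
  -- claim A: all cycle sources reach the root through τhat
  have claimA0 : ∀ m j, j + m = σ.length →
      Relation.ReflTransGen (G.Rel (τhat : Set E))
        (G.src (σ[(k + j) % σ.length]'(hlt _))) (G.src e) := by
    intro m
    induction m with
    | zero =>
      intro j hj
      have hkj : (k + j) % σ.length = k := by
        subst hj
        simp [Nat.add_mod_right, Nat.mod_eq_of_lt hk]
      simp only [hkj, hke]
      exact Relation.ReflTransGen.refl
    | succ m ih =>
      intro j hj
      by_cases hik : (k + j) % σ.length = k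
      · simp only [hik, hke]
        exact Relation.ReflTransGen.refl
      · have hmem' : σ[(k + j) % σ.length]'(hlt _) ∈ τhat := hcycmem _ (hlt _) hik
        have hnext : ((k + j) % σ.length + 1) % σ.length = (k + (j + 1)) % σ.length := by
          rw [Nat.mod_add_mod, ← Nat.add_assoc]
        have hstep' : G.Rel (τhat : Set E)
            (G.src (σ[(k + j) % σ.length]'(hlt _)))
            (G.src (σ[(k + (j + 1)) % σ.length]'(hlt _))) := by
          refine ⟨_, Finset.mem_coe.2 hmem', rfl, ?_⟩
          rw [hstep _ (hlt _)]
          exact congrArg G.src (by simp only [hnext])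
        exact Relation.ReflTransGen.head hstep' (ih (j + 1) (by omega))
  have claimA : ∀ g ∈ σ, Relation.ReflTransGen (G.Rel (τhat : Set E)) (G.src g) (G.src e) := by
    intro g hg
    obtain ⟨i, hil, hig⟩ := List.mem_iff_getElem.1 hg
    have hj : (k + (σ.length + i - k) % σ.length) % σ.length = i := by
      rw [Nat.add_mod_mod]
      have h2 : k + (σ.length + i - k) = σ.length + i := by omega
      rw [h2, Nat.add_comm, Nat.add_mod_right, Nat.mod_eq_of_lt hil]
    have hA := claimA0 (σ.length - (σ.length + i - k) % σ.length)
      ((σ.length + i - k) % σ.length) (by have := hlt (σ.length + i - k); omega)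
    have hgg : σ[(k + (σ.length + i - k) % σ.length) % σ.length]'(hlt _) = σ[i] := by
      simp only [hj]
    rw [← hig, ← hgg]
    exact hA
  -- claim B : every node reaches root
  have claimB : ∀ v : V, Relation.ReflTransGen (G.Rel (τhat : Set E)) v (G.src e) := by
    intro v
    have hv := hτreach v (Set.mem_univ v)
    induction hv using Relation.ReflTransGen.head_induction_on with
    | refl => exact Relation.ReflTransGen.refl
    | head h' _ ih =>
      obtain ⟨f, hf, hsrc, htgt⟩ := h'
      by_cases hcyc : ∃ g ∈ σ, G.src g = G.src f
      · obtain ⟨g, hg, hgs⟩ := hcyc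
        rw [← hsrc, ← hgs]
        exact claimA g hg
      · refine Relation.ReflTransGen.head ⟨f, ?_, hsrc, htgt⟩ ih
        exact Finset.mem_coe.2 ((hmem f).2 (Or.inl ⟨hf, hcyc⟩))
  -- no edge of τhat has source equal to root
  have hroot : ∀ f ∈ τhat, G.src f ≠ G.src e := by
    intro f hf
    rcases (hmem f).1 hf with ⟨hfτ, hno⟩ | ⟨hfσ, hfe⟩
    · intro hc; exact hno ⟨e, he, hc.symm⟩
    · intro hc; exact hfe (hinj hfσ he hc)
  -- uniqueness of outgoing edges
  have huniq : ∀ v : V, v ≠ G.src e → ∃! f, f ∈ τhat ∧ G.src f = v := by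
    intro v hv
    by_cases hcyc : ∃ g ∈ σ, G.src g = v
    · obtain ⟨g, hg, hgs⟩ := hcyc
      have hgne : g ≠ e := fun h => hv (by rw [← hgs, h])
      refine ⟨g, ⟨(hmem g).2 (Or.inr ⟨hg, hgne⟩), hgs⟩, ?_⟩
      rintro f ⟨hf, hfs⟩
      rcases (hmem f).1 hf with ⟨_, hno⟩ | ⟨hfσ, _⟩
      · exact absurd ⟨g, hg, by rw [hgs, hfs]⟩ hno
      · exact hinj hfσ hg (by rw [hfs, hgs])
    · obtain ⟨f, ⟨hfτ, hfs⟩, hfu⟩ := hτuniq v (Set.mem_univ v) hv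
      have hfno : ¬ ∃ g ∈ σ, G.src g = G.src f := by rw [hfs]; exact hcyc
      refine ⟨f, ⟨(hmem f).2 (Or.inl ⟨hfτ, hfno⟩), hfs⟩, ?_⟩
      rintro f' ⟨hf', hfs'⟩
      rcases (hmem f').1 hf' with ⟨hf'τ, _⟩ | ⟨hf'σ, _⟩
      · exact hfu f' ⟨hf'τ, hfs'⟩
      · exact absurd ⟨f', hf'σ, hfs'⟩ hcyc
  have hST : G.IsSpanningTree τhat (G.src e) :=
    ⟨fun f _ => ⟨Set.mem_univ _, Set.mem_univ _⟩,
     fun v _ hv => huniq v hv, hroot, fun v _ => claimB v⟩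
  have hcont : ∀ f ∈ σ, f ≠ e → f ∈ τhat := fun f hf hfe =>
    (hmem f).2 (Or.inr ⟨hf, hfe⟩)
  exact ⟨hST, hcont, ⟨e, he, τhat, hST, hcont, rfl⟩⟩
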